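/- Representation of the Constrained Aumann–Shapley allocation (Lemma 3.6, case where the liquidity horizon is not first in the permutation): Let N be a positive integer, let g : (Fin N → ℝ) → ℝ be positively homogeneous of degree 1 and Fréchet differentiable at the all-ones vector 𝟙 with derivative D, suppose g(𝟙) ≠ 0, and let C > 0 be a real constant. Define F : (Fin N → ℝ) → ℝ by F(v) = sqrt(C + g(v)²), and define φ_n : ℝ → ℝ by φ_n(q) = (fderiv ℝ F (q • 𝟙))(e_n) (with the convention that fderiv is 0 at points of non-differentiability). Then for every n ∈ Fin N, ∫_0^1 φ_n(q) dq = ((sqrt(C + g(𝟙)²) − sqrt(C)) / g(𝟙)) · D(e_n). -/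

import Mathlib

/-- Representation of the Constrained Aumann–Shapley allocation
(Lemma 3.6, case where the liquidity horizon is not first in the permutation). -/
theorem cas_representation {N : ℕ} (hN : 0 < N)
    (g : (Fin N → ℝ) → ℝ)
    (hhom : ∀ (a : ℝ), 0 ≤ a → ∀ v : Fin N → ℝ, g (a • v) = a * g v)
    (D : (Fin N → ℝ) →L[ℝ] ℝ)
    (hg : HasFDerivAt g D (1 : Fin N → ℝ))
    (hne : g (1 : Fin N → ℝ) ≠ 0)
    (C : ℝ) (hC : 0 < C) :
    ∀ n : Fin N,
      ∫ q in (0:ℝ)..1,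
          (fderiv ℝ (fun v => Real.sqrt (C + g v ^ 2)) (q • (1 : Fin N → ℝ)))
            (Pi.single n 1)
        = ((Real.sqrt (C + g (1 : Fin N → ℝ) ^ 2) - Real.sqrt C) / g (1 : Fin N → ℝ))
            * D (Pi.single n 1) := by
  intro n
  set b : ℝ := g (1 : Fin N → ℝ) with hb
  set e : ℝ := D (Pi.single n 1) with he
  -- g has derivative D at q • 1 for q > 0
  have hgq : ∀ q : ℝ, 0 < q → HasFDerivAt g D (q • (1 : Fin N → ℝ)) := by
    intro q hq
    have hq' : q ≠ 0 := ne_of_gt hq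
    have hlin : HasFDerivAt (fun v : Fin N → ℝ => q⁻¹ • v)
        (q⁻¹ • ContinuousLinearMap.id ℝ (Fin N → ℝ)) (q • (1 : Fin N → ℝ)) :=
      (q⁻¹ • ContinuousLinearMap.id ℝ (Fin N → ℝ)).hasFDerivAt
    have hpt : q⁻¹ • (q • (1 : Fin N → ℝ)) = (1 : Fin N → ℝ) := by
      rw [smul_smul, inv_mul_cancel₀ hq', one_smul]
    have hg' : HasFDerivAt g D (q⁻¹ • (q • (1 : Fin N → ℝ))) := by rw [hpt]; exact hg
    have hcomp : HasFDerivAt (fun v : Fin N → ℝ => g (q⁻¹ • v))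
        (D.comp (q⁻¹ • ContinuousLinearMap.id ℝ (Fin N → ℝ))) (q • (1 : Fin N → ℝ)) :=
      hg'.comp (q • (1 : Fin N → ℝ)) hlin
    have hmul : HasFDerivAt (fun v : Fin N → ℝ => q * g (q⁻¹ • v))
        (q • D.comp (q⁻¹ • ContinuousLinearMap.id ℝ (Fin N → ℝ))) (q • (1 : Fin N → ℝ)) :=
      hcomp.const_smul q
    have hfun : (fun v : Fin N → ℝ => q * g (q⁻¹ • v)) = g := by
      funext v
      rw [hhom q⁻¹ (by positivity) v]
      field_simp
    have hder : q • D.comp (q⁻¹ • ContinuousLinearMap.id ℝ (Fin N → ℝ)) = D := by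
      ext x
      simp [smul_smul, mul_inv_cancel₀ hq']
    rw [hfun, hder] at hmul
    exact hmul
  -- value of g at q • 1
  have hgval : ∀ q : ℝ, 0 ≤ q → g (q • (1 : Fin N → ℝ)) = q * b := fun q hq => hhom q hq _
  -- F has explicit derivative at q • 1 for q > 0
  have hF : ∀ q : ℝ, 0 < q →
      HasFDerivAt (fun v => Real.sqrt (C + g v ^ 2))
        ((q * b / Real.sqrt (C + (q * b) ^ 2)) • D) (q • (1 : Fin N → ℝ)) := by
    intro q hq
    have hgv := hgval q hq.le
    have hmul := ((hgq q hq).mul (hgq q hq)).const_add C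
    have hfun2 : (fun v => C + g v ^ 2) = fun v => C + g v * g v := by
      funext v; ring
    have hder2 : (2 * g (q • (1 : Fin N → ℝ))) • D
        = g (q • (1 : Fin N → ℝ)) • D + g (q • (1 : Fin N → ℝ)) • D := by
      rw [two_mul, add_smul]
    have hinner : HasFDerivAt (fun v => C + g v ^ 2)
        ((2 * g (q • (1 : Fin N → ℝ))) • D) (q • (1 : Fin N → ℝ)) := by
      rw [hfun2, hder2]; exact hmul
    have hpos : 0 < C + g (q • (1 : Fin N → ℝ)) ^ 2 := by positivity
    have hsqrt : HasDerivAt Real.sqrt (1 / (2 * Real.sqrt (C + g (q • (1 : Fin N → ℝ)) ^ 2)))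
        (C + g (q • (1 : Fin N → ℝ)) ^ 2) := Real.hasDerivAt_sqrt (ne_of_gt hpos)
    have := hsqrt.comp_hasFDerivAt (q • (1 : Fin N → ℝ)) hinner
    refine this.congr_fderiv ?_
    rw [hgv]
    ext x
    have hs : Real.sqrt (C + (q * b) ^ 2) ≠ 0 := by positivity
    simp only [ContinuousLinearMap.coe_smul', Pi.smul_apply, smul_eq_mul]
    field_simp
  -- the pointwise value of the integrand on (0,1]
  have hval : ∀ q ∈ Set.Ioc (0:ℝ) 1,
      (fderiv ℝ (fun v => Real.sqrt (C + g v ^ 2)) (q • (1 : Fin N → ℝ))) (Pi.single n 1)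
        = q * b / Real.sqrt (C + (q * b) ^ 2) * e := by
    intro q hq
    rw [(hF q hq.1).fderiv]
    simp [he]
  -- FTC for the explicit function
  have hderivH : ∀ q : ℝ,
      HasDerivAt (fun t => Real.sqrt (C + (t * b) ^ 2) / b * e)
        (q * b / Real.sqrt (C + (q * b) ^ 2) * e) q := by
    intro q
    have hpos : 0 < C + (q * b) ^ 2 := by positivity
    have hs : Real.sqrt (C + (q * b) ^ 2) ≠ 0 := by positivity
    have h1 : HasDerivAt (fun t : ℝ => C + (t * b) ^ 2) (2 * (q * b) * b) q := by
      have : HasDerivAt (fun t : ℝ => t * b) b q := by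
        simpa using (hasDerivAt_id q).mul_const b
      simpa using (this.pow 2).const_add C
    have h2 := (Real.hasDerivAt_sqrt (ne_of_gt hpos)).comp q h1
    have h3 := (h2.div_const b).mul_const e
    refine h3.congr_deriv (Eq.symm ?_)
    rw [mul_div_assoc, mul_div_assoc, mul_div_cancel_right₀ _ hne]
    ring
  have hInt : ∫ q in (0:ℝ)..1, q * b / Real.sqrt (C + (q * b) ^ 2) * e
      = (Real.sqrt (C + b ^ 2) - Real.sqrt C) / b * e := by
    have hcont : ContinuousOn (fun q : ℝ => q * b / Real.sqrt (C + (q * b) ^ 2) * e)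
        (Set.uIcc (0:ℝ) 1) := by
      apply ContinuousOn.mul _ continuousOn_const
      apply ContinuousOn.div
      · exact (continuousOn_id.mul continuousOn_const)
      · exact (Real.continuous_sqrt.comp (by continuity)).continuousOn
      · intro x _
        positivity
    have := intervalIntegral.integral_eq_sub_of_hasDerivAt
      (fun q _ => hderivH q) (hcont.intervalIntegrable)
    rw [this, show ((1:ℝ) * b) ^ 2 = b ^ 2 by ring, show C + ((0:ℝ) * b) ^ 2 = C by ring]
    ring
  calc ∫ q in (0:ℝ)..1,
          (fderiv ℝ (fun v => Real.sqrt (C + g v ^ 2)) (q • (1 : Fin N → ℝ))) (Pi.single n 1)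
      = ∫ q in (0:ℝ)..1, q * b / Real.sqrt (C + (q * b) ^ 2) * e := by
        apply intervalIntegral.integral_congr_ae
        filter_upwards with q hq
        exact hval q (by rwa [Set.uIoc_of_le zero_le_one] at hq)
    _ = (Real.sqrt (C + b ^ 2) - Real.sqrt C) / b * e := hInt
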